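/- Let P(u₋₁,u,u₁,u₂) be affine-linear in each variable with the square symmetries P(u₋₁,u,u₁,u₂)=P(u₂,u₁,u,u₋₁)=P(u₁,u,u₋₁,u₂), and define h(u₋₁,u,u₁,u₂) := (∂P/∂u₋₁)(∂P/∂u₂) − (∂²P/∂u₋₁∂u₂)·P. Then h does not depend on u₋₁ and u₂ (i.e., ∂h/∂u₋₁ = ∂h/∂u₂ = 0 as polynomials), and the resulting polynomial H(u,u₁) := h is symmetric: H(u,u₁) = H(u₁,u), and is biquadratic (degree at most 2 in each of u, u₁). -/

import Mathlib

open MvPolynomial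

section AuxStmt18
open Finsupp

variable {K : Type*} [CommRing K]

lemma my_coeff_pderiv (i : Fin 4) (f : MvPolynomial (Fin 4) K) (m : Fin 4 →₀ ℕ) :
    coeff m (pderiv i f) = ((m i : ℕ) + 1) * coeff (m + Finsupp.single i 1) f := by
  induction f using MvPolynomial.induction_on' with
  | add p q hp hq => simp [hp, hq, mul_add]
  | monomial s a =>
    rw [pderiv_monomial, coeff_monomial, coeff_monomial]
    by_cases hs : s = m + Finsupp.single i 1
    · subst hs
      rw [if_pos (add_tsub_cancel_right _ _), if_pos rfl]
      simp [mul_comm, mul_assoc, mul_left_comm]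
    · rw [if_neg hs]
      by_cases hsi : s i = 0
      · by_cases h2 : s - Finsupp.single i 1 = m <;> simp [h2, hsi]
      · have hle : Finsupp.single i 1 ≤ s := by
          rw [Finsupp.single_le_iff]; omega
        have : s - Finsupp.single i 1 ≠ m := by
          intro hm
          exact hs (by rw [← hm, tsub_add_cancel_of_le hle])
        simp [this]

lemma my_pderiv_comm (i j : Fin 4) (p : MvPolynomial (Fin 4) K) :
    pderiv i (pderiv j p) = pderiv j (pderiv i p) := by
  ext m
  simp only [my_coeff_pderiv, Finsupp.add_apply, Finsupp.single_apply]
  rcases eq_or_ne i j with rfl | hij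
  · rfl
  · rw [add_right_comm m (Finsupp.single j 1) (Finsupp.single i 1)]
    simp [Finsupp.single_apply, hij, hij.symm]
    ring

lemma my_degreeOf_le_iff {f : MvPolynomial (Fin 4) K} {i : Fin 4} {n : ℕ} :
    f.degreeOf i ≤ n ↔ ∀ m ∈ f.support, m i ≤ n := by
  rw [degreeOf_eq_sup]; exact Finset.sup_le_iff

lemma my_degreeOf_pderiv_le (i j : Fin 4) (p : MvPolynomial (Fin 4) K) :
    (pderiv i p).degreeOf j ≤ p.degreeOf j := by
  rw [my_degreeOf_le_iff]
  intro m hm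
  rw [MvPolynomial.mem_support_iff, my_coeff_pderiv] at hm
  have hsup : m + Finsupp.single i 1 ∈ p.support := by
    rw [MvPolynomial.mem_support_iff]
    intro h0; rw [h0, mul_zero] at hm; exact hm rfl
  calc m j ≤ (m + Finsupp.single i 1 : Fin 4 →₀ ℕ) j := by simp
    _ ≤ p.degreeOf j := monomial_le_degreeOf j hsup

lemma my_pderiv_pderiv_self (i : Fin 4) (p : MvPolynomial (Fin 4) K)
    (hp : p.degreeOf i ≤ 1) : pderiv i (pderiv i p) = 0 := by
  ext m
  rw [my_coeff_pderiv, my_coeff_pderiv, coeff_zero]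
  have : coeff (m + Finsupp.single i 1 + Finsupp.single i 1) p = 0 := by
    by_contra hc
    have := monomial_le_degreeOf i (MvPolynomial.mem_support_iff.mpr hc)
    simp [Finsupp.add_apply] at this
    omega
  rw [this, mul_zero, mul_zero]

lemma my_mem_vars_pderiv_ne [IsDomain K] [CharZero K] {i : Fin 4} {f : MvPolynomial (Fin 4) K}
    (hi : i ∈ f.vars) : pderiv i f ≠ 0 := by
  rw [mem_vars] at hi
  obtain ⟨d, hd, hdi⟩ := hi
  rw [Finsupp.mem_support_iff] at hdi
  intro h0
  have hle : (Finsupp.single i 1 : Fin 4 →₀ ℕ) ≤ d := by rw [Finsupp.single_le_iff]; omega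
  have key := my_coeff_pderiv i f (d - Finsupp.single i 1)
  rw [h0, coeff_zero, tsub_add_cancel_of_le hle] at key
  have h1 : ((d - Finsupp.single i 1 : Fin 4 →₀ ℕ) i : ℕ) + 1 = d i := by
    rw [Finsupp.tsub_apply, Finsupp.single_apply, if_pos rfl]; omega
  rw [← Nat.cast_add_one, h1] at key
  rcases mul_eq_zero.mp key.symm with hz | hz
  · exact hdi (Nat.cast_eq_zero.mp hz)
  · exact MvPolynomial.mem_support_iff.mp hd hz

lemma my_rename_eq_self {f : Fin 4 → Fin 4} {p : MvPolynomial (Fin 4) K}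
    (hf : ∀ i ∈ p.vars, f i = i) : rename f p = p := by
  conv_lhs => rw [p.as_sum]
  rw [map_sum]
  conv_rhs => rw [p.as_sum]
  refine Finset.sum_congr rfl fun v hv => ?_
  rw [rename_monomial]
  have : Finsupp.mapDomain f v = v := by
    rw [Finsupp.mapDomain_congr (g := id) fun i hi => hf i ((mem_vars i).mpr ⟨v, hv, hi⟩),
      Finsupp.mapDomain_id]
  rw [this]

end AuxStmt18

/-- From a square-symmetric affine-linear polynomial P, the combination
h = ∂₋₁(P)·∂₂(P) − ∂₋₁∂₂(P)·P does not depend on u₋₁ = X 0 and u₂ = X 3, and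
defines a symmetric biquadratic polynomial H(u,u₁) in u = X 1, u₁ = X 2. -/
theorem stmt18 {K : Type*} [Field K] [CharZero K]
    (P : MvPolynomial (Fin 4) K)
    (hlin : ∀ i, P.degreeOf i ≤ 1)
    (hs1 : rename (![3, 2, 1, 0] : Fin 4 → Fin 4) P = P)
    (hs2 : rename (![2, 1, 0, 3] : Fin 4 → Fin 4) P = P)
    (h : MvPolynomial (Fin 4) K)
    (hh : h = pderiv 0 P * pderiv 3 P - pderiv 0 (pderiv 3 P) * P) :
    pderiv 0 h = 0 ∧ pderiv 3 h = 0 ∧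
    rename (Equiv.swap (1 : Fin 4) 2 : Fin 4 → Fin 4) h = h ∧
    h.degreeOf 1 ≤ 2 ∧ h.degreeOf 2 ≤ 2 := by
  have h00 : pderiv 0 (pderiv 0 P) = 0 := my_pderiv_pderiv_self 0 P (hlin 0)
  have h33 : pderiv 3 (pderiv 3 P) = 0 := my_pderiv_pderiv_self 3 P (hlin 3)
  have e1 : pderiv 0 h = 0 := by
    have t1 : pderiv 0 (pderiv 0 (pderiv 3 P)) = 0 := by
      rw [my_pderiv_comm 0 3 P, my_pderiv_comm 0 3 (pderiv 0 P), h00, map_zero]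
    rw [hh, map_sub, pderiv_mul, pderiv_mul, h00, t1]
    ring
  have e2 : pderiv 3 h = 0 := by
    have t1 : pderiv 3 (pderiv 0 (pderiv 3 P)) = 0 := by
      rw [my_pderiv_comm 3 0 (pderiv 3 P), h33, map_zero]
    have t2 : pderiv 3 (pderiv 0 P) = pderiv 0 (pderiv 3 P) := my_pderiv_comm 3 0 P
    rw [hh, map_sub, pderiv_mul, pderiv_mul, h33, t1, t2]
    ring
  refine ⟨e1, e2, ?_, ?_, ?_⟩
  · -- symmetry
    set σ : Fin 4 → Fin 4 := ![3, 2, 1, 0] with hσ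
    have hinj : Function.Injective σ := by decide
    have hr0 : rename σ (pderiv 0 P) = pderiv 3 P := by
      have := pderiv_rename hinj 0 P
      rw [hs1] at this
      exact this.symm
    have hr3 : rename σ (pderiv 3 P) = pderiv 0 P := by
      have := pderiv_rename hinj 3 P
      rw [hs1] at this
      exact this.symm
    have hr03 : rename σ (pderiv 0 (pderiv 3 P)) = pderiv 0 (pderiv 3 P) := by
      have h1 := pderiv_rename hinj 0 (pderiv 3 P)
      rw [hr3] at h1
      rw [← h1]
      exact my_pderiv_comm 3 0 P
    have hσh : rename σ h = h := by
      rw [hh, map_sub, map_mul, map_mul, hr0, hr3, hr03, hs1]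
      ring
    have hvars : ∀ i ∈ h.vars, (Equiv.swap (0 : Fin 4) 3 : Fin 4 → Fin 4) i = i := by
      intro i hi
      have hi0 : i ≠ 0 := fun hz => my_mem_vars_pderiv_ne (hz ▸ hi) e1
      have hi3 : i ≠ 3 := fun hz => my_mem_vars_pderiv_ne (hz ▸ hi) e2
      exact Equiv.swap_apply_of_ne_of_ne hi0 hi3
    have hcomp : (Equiv.swap (1 : Fin 4) 2 : Fin 4 → Fin 4)
        = (Equiv.swap (0 : Fin 4) 3 : Fin 4 → Fin 4) ∘ σ := by decide
    rw [hcomp, ← rename_rename, hσh, my_rename_eq_self hvars]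
  · calc h.degreeOf 1 ≤ max ((pderiv 0 P * pderiv 3 P).degreeOf 1)
          ((pderiv 0 (pderiv 3 P) * P).degreeOf 1) := hh ▸ degreeOf_sub_le 1 _ _
      _ ≤ 2 := by
        apply max_le
        · exact le_trans (degreeOf_mul_le _ _ _) (add_le_add
            (le_trans (my_degreeOf_pderiv_le _ _ _) (hlin 1))
            (le_trans (my_degreeOf_pderiv_le _ _ _) (hlin 1)))
        · exact le_trans (degreeOf_mul_le _ _ _) (add_le_add
            (le_trans (my_degreeOf_pderiv_le _ _ _)
              (le_trans (my_degreeOf_pderiv_le _ _ _) (hlin 1))) (hlin 1))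
  · calc h.degreeOf 2 ≤ max ((pderiv 0 P * pderiv 3 P).degreeOf 2)
          ((pderiv 0 (pderiv 3 P) * P).degreeOf 2) := hh ▸ degreeOf_sub_le 2 _ _
      _ ≤ 2 := by
        apply max_le
        · exact le_trans (degreeOf_mul_le _ _ _) (add_le_add
            (le_trans (my_degreeOf_pderiv_le _ _ _) (hlin 2))
            (le_trans (my_degreeOf_pderiv_le _ _ _) (hlin 2)))
        · exact le_trans (degreeOf_mul_le _ _ _) (add_le_add
            (le_trans (my_degreeOf_pderiv_le _ _ _)
              (le_trans (my_degreeOf_pderiv_le _ _ _) (hlin 2))) (hlin 2))
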